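/- arXiv:1202.1077 — 7 statements merged into one kernel-verified Lean document; each statement's English description precedes it below -/
import Mathlib

section
/- Let U ⊆ ℝⁿ be open, let Γ and Γ̂ be symmetric Christoffel fields on U with difference tensor S, and suppose n ≥ 1. Let W ⊆ ℝ × U × ℝⁿ be an open set containing {0} × U × ℝⁿ and let r : W → ℝ be smooth with r(0,x,v) = 0 and (∂r/∂t)(0,x,v) = 1 for all (x,v) ∈ U × ℝⁿ. Assume that for every (x,v) ∈ U × ℝⁿ, every Γ-geodesic γ : I → U with 0 ∈ I, γ(0) = x, γ'(0) = v, and every t such that (t,x,v) ∈ W and s ↦ r(s,x,v) maps a neighborhood of t into I, the curve s ↦ γ(r(s,x,v)) satisfies the Γ̂-geodesic equation at t. Then there exists a smooth map α : U → (ℝⁿ)* (into the dual space of ℝⁿ) such that S(x)(v,w) = (1/2)·(α(x)(v)·w + α(x)(w)·v) for all x ∈ U and v,w ∈ ℝⁿ. -/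
open Set

/-- Vectors in `ℝⁿ`. -/
abbrev Vec (n : ℕ) : Type := Fin n → ℝ

/-- A Christoffel field on (an open subset of) `ℝⁿ`: a field of bilinear maps
`ℝⁿ × ℝⁿ → ℝⁿ`. -/
abbrev Christoffel (n : ℕ) : Type := Vec n → Vec n →L[ℝ] Vec n →L[ℝ] Vec n

/-- `γ` is a `Γ`-geodesic on the interval `I`, with values in `U`. -/
def IsGeodesic {n : ℕ} (Γ : Christoffel n) (U : Set (Vec n)) (I : Set ℝ)
    (γ : ℝ → Vec n) : Prop :=
  Set.MapsTo γ I U ∧ ContDiffOn ℝ (2 : ℕ∞) γ I ∧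
    ∀ t ∈ I, deriv (deriv γ) t = -(Γ (γ t) (deriv γ t) (deriv γ t))



lemma smul_cancel_vec {n : ℕ} {v : Vec n} (hv : v ≠ 0) {a b : ℝ} (h : a • v = b • v) : a = b := by
  obtain ⟨i, hi⟩ := Function.ne_iff.mp hv
  have := congrFun h i
  simp only [Pi.smul_apply, smul_eq_mul] at this
  exact mul_right_cancel₀ hi this

lemma indep_of_not_dep {n : ℕ} {v w : Vec n} (hv : v ≠ 0) (hdep : ¬∃ t : ℝ, w = t • v) :
    ∀ a b : ℝ, a • v + b • w = 0 → a = 0 ∧ b = 0 := by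
  intro a b hab
  by_cases hb : b = 0
  · subst hb
    simp only [zero_smul, add_zero] at hab
    exact ⟨(smul_eq_zero.mp hab).resolve_right hv, rfl⟩
  · exfalso
    apply hdep
    refine ⟨-a/b, ?_⟩
    have h1 : b • w = -(a • v) := by rwa [add_comm, add_eq_zero_iff_eq_neg] at hab
    rw [← neg_smul] at h1
    have h2 := congrArg (fun z => (b⁻¹ : ℝ) • z) h1
    simp only [smul_smul, inv_mul_cancel₀ hb, one_smul] at h2
    rw [h2]; ring_nf

lemma alg_lemma {n : ℕ} (S : Vec n →L[ℝ] Vec n →L[ℝ] Vec n)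
    (hsym : ∀ v w, S v w = S w v) (h : ∀ v, ∃ c : ℝ, S v v = c • v) :
    ∃ φ : Vec n →ₗ[ℝ] ℝ, ∀ v w, S v w = (1/2 : ℝ) • (φ v • w + φ w • v) := by
  classical
  choose c hc using h
  set φ : Vec n → ℝ := fun v => if v = 0 then 0 else c v with hφdef
  have hφ : ∀ v, S v v = φ v • v := by
    intro v
    by_cases hv : v = 0
    · simp [hφdef, hv]
    · simp [hφdef, hv, hc v]
  have hhom : ∀ (a : ℝ) (v : Vec n), φ (a • v) = a * φ v := by
    intro a v
    by_cases hv : v = 0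
    · simp [hφdef, hv]
    by_cases ha : a = 0
    · simp [hφdef, ha]
    have h1 : S (a • v) (a • v) = φ (a • v) • (a • v) := hφ _
    have h2 : S (a • v) (a • v) = (a * (a * φ v)) • v := by
      simp only [map_smul, ContinuousLinearMap.smul_apply, hφ v]
      module
    rw [h1] at h2
    have h3 : (φ (a • v) * a) • v = (a * (a * φ v)) • v := by
      rw [← h2]; module
    have h4 := smul_cancel_vec hv h3
    have h5 : a * φ (a • v) = a * (a * φ v) := by rw [mul_comm a (φ (a • v))]; exact h4
    exact mul_left_cancel₀ ha h5
  have hindep_key : ∀ v w : Vec n, (∀ a b : ℝ, a • v + b • w = 0 → a = 0 ∧ b = 0) →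
      (φ (v + w) = φ v + φ w ∧ S v w = (1/2 : ℝ) • (φ v • w + φ w • v)) := by
    intro v w hind
    set a := φ (v + w) with hadef
    set b := φ (v - w) with hbdef
    set p := φ v
    set q := φ w
    have e1 : a • (v + w) = p • v + q • w + (2 : ℝ) • S v w := by
      have h1 : S (v + w) (v + w) = a • (v + w) := hφ _
      have h2 : S (v + w) (v + w) = S v v + S w w + (2:ℝ) • S v w := by
        simp only [map_add, ContinuousLinearMap.add_apply]
        rw [hsym w v]; module
      rw [h1] at h2
      rw [h2, hφ, hφ]
    have e2 : b • (v - w) = p • v + q • w - (2 : ℝ) • S v w := by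
      have h1 : S (v - w) (v - w) = b • (v - w) := hφ _
      have h2 : S (v - w) (v - w) = S v v + S w w - (2:ℝ) • S v w := by
        simp only [map_sub, ContinuousLinearMap.sub_apply]
        rw [hsym w v]; module
      rw [h1] at h2
      rw [h2, hφ, hφ]
    have esum : (a + b - 2*p) • v + (a - b - 2*q) • w = 0 := by
      have h' : a • (v + w) + b • (v - w) = (2:ℝ) • (p • v) + (2:ℝ) • (q • w) := by
        rw [e1, e2]; module
      have h'' : (a + b - 2*p) • v + (a - b - 2*q) • w =
          a • (v + w) + b • (v - w) - ((2:ℝ) • (p • v) + (2:ℝ) • (q • w)) := by module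
      rw [h'', h', sub_self]
    obtain ⟨hA, hB⟩ := hind _ _ esum
    have hab1 : a + b = 2 * p := by linarith [sub_eq_zero.mp hA]
    have hab2 : a - b = 2 * q := by linarith [sub_eq_zero.mp hB]
    constructor
    · linarith
    · have ediff : (4 : ℝ) • S v w = (a - b) • v + (a + b) • w := by
        have h' : a • (v + w) - b • (v - w) = (4:ℝ) • S v w := by rw [e1, e2]; module
        rw [← h']; module
      rw [hab1, hab2] at ediff
      have h'' : S v w = (1/4 : ℝ) • ((2*q) • v + (2*p) • w) := by
        rw [← ediff]; module
      rw [h'']; module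
  have hadd : ∀ v w : Vec n, φ (v + w) = φ v + φ w := by
    intro v w
    by_cases hv : v = 0
    · simp [hv, hφdef]
    by_cases hw : w = 0
    · simp [hw, hφdef]
    by_cases hdep : ∃ t : ℝ, w = t • v
    · obtain ⟨t, rfl⟩ := hdep
      have h1 : v + t • v = (1 + t) • v := by module
      rw [h1, hhom, hhom]
      ring
    · exact (hindep_key v w (indep_of_not_dep hv hdep)).1
  have hmain : ∀ v w, S v w = (1/2 : ℝ) • (φ v • w + φ w • v) := by
    intro v w
    by_cases hv : v = 0
    · simp [hv, hφdef]
    by_cases hdep : ∃ t : ℝ, w = t • v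
    · obtain ⟨t, rfl⟩ := hdep
      have h1 : S v (t • v) = (t * φ v) • v := by
        rw [map_smul, hφ]; module
      rw [h1, hhom]
      module
    · exact (hindep_key v w (indep_of_not_dep hv hdep)).2
  exact ⟨{ toFun := φ, map_add' := hadd,
           map_smul' := fun a v => by simpa using hhom a v }, hmain⟩

noncomputable def basisVec {n : ℕ} (i : Fin n) : Vec n := fun j => if i = j then (1:ℝ) else 0

noncomputable def traceA (n : ℕ) : (Vec n →L[ℝ] Vec n →L[ℝ] Vec n) →L[ℝ] (Vec n →L[ℝ] ℝ) :=
  LinearMap.toContinuousLinearMap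
  { toFun := fun T : Vec n →L[ℝ] Vec n →L[ℝ] Vec n => (2/(n+1) : ℝ) • ∑ i : Fin n,
      (ContinuousLinearMap.proj (R := ℝ) (φ := fun _ : Fin n => ℝ) i).comp (T.flip (basisVec i)),
    map_add' := by
      intro T T'
      ext v
      simp [ContinuousLinearMap.sum_apply, Finset.sum_add_distrib, mul_add, Finset.mul_sum]
    map_smul' := by
      intro a T
      ext v
      simp [ContinuousLinearMap.sum_apply, Finset.mul_sum]
      ring_nf }

lemma traceA_apply {n : ℕ} (T : Vec n →L[ℝ] Vec n →L[ℝ] Vec n) (v : Vec n) :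
    traceA n T v = (2/(n+1) : ℝ) * ∑ i : Fin n, T v (basisVec i) i := by
  simp [traceA, ContinuousLinearMap.proj_apply, Finset.mul_sum,
    ContinuousLinearMap.sum_apply, ContinuousLinearMap.flip_apply]

lemma alpha_construction {n : ℕ} (U : Set (Vec n))
    (S : Vec n → (Vec n →L[ℝ] Vec n →L[ℝ] Vec n))
    (hS : ContDiffOn ℝ (⊤ : ℕ∞) S U)
    (hsym : ∀ x ∈ U, ∀ v w, S x v w = S x w v)
    (hquad : ∀ x ∈ U, ∀ v, ∃ c : ℝ, S x v v = c • v) :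
    ∃ α : Vec n → (Vec n →L[ℝ] ℝ), ContDiffOn ℝ (⊤ : ℕ∞) α U ∧
      ∀ x ∈ U, ∀ v w, S x v w = (1/2 : ℝ) • (α x v • w + α x w • v) := by
  refine ⟨fun x => traceA n (S x), ?_, ?_⟩
  · exact (traceA n).contDiff.comp_contDiffOn hS
  intro x hx v w
  obtain ⟨φ, hφ⟩ := alg_lemma (S x) (hsym x hx) (hquad x hx)
  have keyval : ∀ u : Vec n, traceA n (S x) u = φ u := by
    intro u
    rw [traceA_apply]
    have hterm : ∀ i : Fin n, S x u (basisVec i) i = (1/2 : ℝ) * (φ u * basisVec i i + φ (basisVec i) * u i) := by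
      intro i
      rw [hφ u (basisVec i)]
      simp [smul_eq_mul]
    have hsum : ∑ i : Fin n, S x u (basisVec i) i
        = (1/2 : ℝ) * ((n : ℝ) * φ u + ∑ i : Fin n, φ (basisVec i) * u i) := by
      rw [Finset.sum_congr rfl fun i _ => hterm i]
      rw [← Finset.mul_sum]
      congr 1
      rw [Finset.sum_add_distrib]
      congr 1
      · simp [basisVec]
    have hφu : ∑ i : Fin n, φ (basisVec i) * u i = φ u := by
      have hu : u = ∑ i : Fin n, (u i) • basisVec i := by
        exact pi_eq_sum_univ u
      calc ∑ i : Fin n, φ (basisVec i) * u i = ∑ i : Fin n, φ ((u i) • basisVec i) := by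
            simp [mul_comm]
        _ = φ (∑ i : Fin n, (u i) • basisVec i) := by rw [map_sum]
        _ = φ u := by rw [← hu]
    rw [hsum, hφu]
    have hn : ((n : ℝ) + 1) ≠ 0 := by positivity
    field_simp
  rw [hφ v w, keyval v, keyval w]

theorem key {n : ℕ} (U : Set (Vec n)) (hU : IsOpen U)
    (Γ Γhat : Christoffel n)
    (hΓ : ContDiffOn ℝ (⊤ : ℕ∞) Γ U)
    (W : Set (ℝ × Vec n × Vec n)) (hWopen : IsOpen W)
    (hW0 : ∀ x ∈ U, ∀ v : Vec n, ((0 : ℝ), x, v) ∈ W)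
    (r : ℝ × Vec n × Vec n → ℝ) (hr : ContDiffOn ℝ (⊤ : ℕ∞) r W)
    (hr0 : ∀ x ∈ U, ∀ v : Vec n, r (0, x, v) = 0)
    (hr1 : ∀ x ∈ U, ∀ v : Vec n, deriv (fun t => r (t, x, v)) 0 = 1)
    (hrepar : ∀ x ∈ U, ∀ v : Vec n, ∀ I : Set ℝ, IsOpen I → I.OrdConnected →
      (0 : ℝ) ∈ I → ∀ γ : ℝ → Vec n, IsGeodesic Γ U I γ → γ 0 = x →
      deriv γ 0 = v →
      ∀ t : ℝ, (t, x, v) ∈ W → (∀ᶠ s in nhds t, r (s, x, v) ∈ I) →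
        deriv (deriv (fun s => γ (r (s, x, v)))) t =
          -(Γhat (γ (r (t, x, v)))
              (deriv (fun s => γ (r (s, x, v))) t)
              (deriv (fun s => γ (r (s, x, v))) t)))
    (x : Vec n) (hx : x ∈ U) (v : Vec n) :
    ∃ c : ℝ, Γ x v v - Γhat x v v = c • v := by
  classical
  -- the first-order system for geodesics
  set F : (Vec n × Vec n) → (Vec n × Vec n) := fun y => (y.2, -(Γ y.1 y.2 y.2)) with hFdef
  have hΓx : ContDiffAt ℝ (⊤ : ℕ∞) Γ x := hΓ.contDiffAt (hU.mem_nhds hx)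
  have hF : ContDiffAt ℝ 1 F (x, v) := by
    apply ContDiffAt.prodMk
    · exact contDiff_snd.contDiffAt
    · apply ContDiffAt.neg
      have h1 : ContDiffAt ℝ 1 (fun y : Vec n × Vec n => Γ y.1) (x, v) :=
        (hΓx.of_le (by exact_mod_cast le_top)).comp (x, v) contDiffAt_fst
      exact (h1.clm_apply contDiffAt_snd).clm_apply contDiffAt_snd
  obtain ⟨f, hf0, ε, hε, hfd⟩ := hF.exists_forall_mem_closedBall_exists_eq_forall_mem_Ioo_hasDerivAt₀ 0
  set γ : ℝ → Vec n := fun t => (f t).1 with hγdef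
  set p : ℝ → Vec n := fun t => (f t).2 with hpdef
  have hγ0 : γ 0 = x := by show (f 0).1 = x; rw [hf0]
  have hp0 : p 0 = v := by show (f 0).2 = v; rw [hf0]
  -- shrink interval so that γ stays in U
  have hfc : ContinuousOn f (Ioo (0 - ε) (0 + ε)) := fun t ht =>
    (hfd t ht).continuousAt.continuousWithinAt
  have hOopen : IsOpen (Ioo (0 - ε) (0 + ε) ∩ f ⁻¹' (Prod.fst ⁻¹' U)) :=
    hfc.isOpen_inter_preimage isOpen_Ioo (hU.preimage continuous_fst)
  have h0O : (0 : ℝ) ∈ Ioo (0 - ε) (0 + ε) ∩ f ⁻¹' (Prod.fst ⁻¹' U) := by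
    constructor
    · constructor <;> simp [hε]
    · simp only [mem_preimage, hf0]; exact hx
  obtain ⟨ε', hε', hball⟩ := Metric.isOpen_iff.mp hOopen 0 h0O
  set I : Set ℝ := Ioo (0 - ε') (0 + ε') with hIdef
  have hIball : I = Metric.ball 0 ε' := (Real.ball_eq_Ioo 0 ε').symm
  have hIsub : I ⊆ Ioo (0 - ε) (0 + ε) ∩ f ⁻¹' (Prod.fst ⁻¹' U) := by
    rw [hIball]; exact hball
  have hIopen : IsOpen I := isOpen_Ioo
  have h0I : (0 : ℝ) ∈ I := by constructor <;> simp [hε']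
  have hmaps : MapsTo γ I U := fun t ht => (hIsub ht).2
  -- derivatives of γ and p
  have hγd : ∀ t ∈ I, HasDerivAt γ (p t) t := by
    intro t ht
    have := (ContinuousLinearMap.fst ℝ (Vec n) (Vec n)).hasFDerivAt.comp_hasDerivAt t
      (hfd t (hIsub ht).1)
    exact this
  have hpd : ∀ t ∈ I, HasDerivAt p (-(Γ (γ t) (p t) (p t))) t := by
    intro t ht
    have := (ContinuousLinearMap.snd ℝ (Vec n) (Vec n)).hasFDerivAt.comp_hasDerivAt t
      (hfd t (hIsub ht).1)
    exact this
  have hγderiv : ∀ t ∈ I, deriv γ t = p t := fun t ht => (hγd t ht).deriv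
  have hγcont : ContinuousOn γ I := fun t ht => ((hγd t ht).continuousAt).continuousWithinAt
  have hpcont : ContinuousOn p I := fun t ht => ((hpd t ht).continuousAt).continuousWithinAt
  have hderivEq : Set.EqOn (deriv γ) p I := fun t ht => hγderiv t ht
  have hpderiv : ∀ t ∈ I, deriv p t = -(Γ (γ t) (p t) (p t)) := fun t ht => (hpd t ht).deriv
  -- geodesic equation
  have hgeoeq : ∀ t ∈ I, deriv (deriv γ) t = -(Γ (γ t) (deriv γ t) (deriv γ t)) := by
    intro t ht
    have hev : deriv γ =ᶠ[nhds t] p :=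
      Filter.eventuallyEq_of_mem (hIopen.mem_nhds ht) hderivEq
    rw [hev.deriv_eq, hpderiv t ht, hγderiv t ht]
  -- smoothness of γ
  have hqcont : ContinuousOn (fun t => -(Γ (γ t) (p t) (p t))) I := by
    apply ContinuousOn.neg
    exact ((hΓ.continuousOn.comp hγcont hmaps).clm_apply hpcont).clm_apply hpcont
  have hp1 : ContDiffOn ℝ 1 p I := by
    rw [show (1 : WithTop ℕ∞) = 0 + 1 from rfl]
    rw [contDiffOn_succ_iff_deriv_of_isOpen hIopen]
    refine ⟨fun t ht => (hpd t ht).differentiableAt.differentiableWithinAt, by simp, ?_⟩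
    rw [contDiffOn_zero]
    exact hqcont.congr fun t ht => hpderiv t ht
  have hγ2 : ContDiffOn ℝ (2 : ℕ∞) γ I := by
    have h21 : ((2 : ℕ∞) : WithTop ℕ∞) = 1 + 1 := by norm_cast
    rw [h21, contDiffOn_succ_iff_deriv_of_isOpen hIopen]
    refine ⟨fun t ht => (hγd t ht).differentiableAt.differentiableWithinAt, by simp, ?_⟩
    exact hp1.congr hderivEq
  have hgeo : IsGeodesic Γ U I γ := ⟨hmaps, hγ2, hgeoeq⟩
  have hdγ0 : deriv γ 0 = v := by rw [hγderiv 0 h0I, hp0]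
  -- the reparametrization function
  have hJ₀open : IsOpen {s : ℝ | (s, x, v) ∈ W} :=
    hWopen.preimage (continuous_id.prodMk continuous_const)
  have h0J₀ : (0 : ℝ) ∈ {s : ℝ | (s, x, v) ∈ W} := hW0 x hx v
  have hrtc : ContDiffOn ℝ (⊤ : ℕ∞) (fun s : ℝ => r (s, x, v)) {s : ℝ | (s, x, v) ∈ W} := by
    apply hr.comp (f := fun s : ℝ => ((s, x, v) : ℝ × Vec n × Vec n))
    · exact (contDiff_id.prodMk contDiff_const).contDiffOn
    · intro s hs; exact hs
  have hrt0 : r ((0 : ℝ), x, v) = 0 := hr0 x hx v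
  have hrtcont : ContinuousAt (fun s : ℝ => r (s, x, v)) 0 :=
    (hrtc.contDiffAt (hJ₀open.mem_nhds h0J₀)).continuousAt
  have hev : ∀ᶠ s in nhds (0 : ℝ), r (s, x, v) ∈ I := by
    apply hrtcont.eventually_mem
    rw [hrt0]
    exact hIopen.mem_nhds h0I
  -- apply the hypothesis
  have hmain := hrepar x hx v I hIopen Set.ordConnected_Ioo h0I γ hgeo hγ0 hdγ0 0
    (hW0 x hx v) hev
  -- now compute both sides
  set J : Set ℝ := {s : ℝ | (s, x, v) ∈ W} ∩ (fun s : ℝ => r (s, x, v)) ⁻¹' I with hJdef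
  have hJopen : IsOpen J :=
    hrtc.continuousOn.isOpen_inter_preimage hJ₀open hIopen
  have h0J : (0 : ℝ) ∈ J := ⟨h0J₀, by simp only [mem_preimage, hrt0]; exact h0I⟩
  set d : ℝ → ℝ := deriv (fun s : ℝ => r (s, x, v)) with hddef
  have hrtd : ∀ s ∈ J, HasDerivAt (fun u : ℝ => r (u, x, v)) (d s) s := by
    intro s hs
    have : DifferentiableAt ℝ (fun u : ℝ => r (u, x, v)) s :=
      ((hrtc.contDiffAt (hJ₀open.mem_nhds hs.1)).of_le (m := 1) (by exact_mod_cast le_top)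
        ).differentiableAt one_ne_zero
    exact this.hasDerivAt
  have hd0 : d 0 = 1 := hr1 x hx v
  have hcompd : ∀ s ∈ J, HasDerivAt (fun u : ℝ => γ (r (u, x, v)))
      (d s • p (r (s, x, v))) s := by
    intro s hs
    exact (hγd (r (s, x, v)) hs.2).scomp s (hrtd s hs)
  have hDeq : ∀ s ∈ J, deriv (fun u : ℝ => γ (r (u, x, v))) s = d s • p (r (s, x, v)) :=
    fun s hs => (hcompd s hs).deriv
  -- first derivative at 0
  have hD0 : deriv (fun u : ℝ => γ (r (u, x, v))) 0 = v := by
    rw [hDeq 0 h0J, hrt0, hd0, hp0, one_smul]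
  -- second derivative at 0
  have hdd : DifferentiableAt ℝ d 0 := by
    have : ContDiffOn ℝ (⊤ : ℕ∞) d {s : ℝ | (s, x, v) ∈ W} :=
      hrtc.deriv_of_isOpen hJ₀open (by exact_mod_cast le_top)
    exact ((this.contDiffAt (hJ₀open.mem_nhds h0J₀)).of_le (m := 1) (by exact_mod_cast le_top)
      ).differentiableAt one_ne_zero
  have hprd : HasDerivAt (fun u : ℝ => p (r (u, x, v))) ((1:ℝ) • -(Γ x v v)) 0 := by
    have h1 : HasDerivAt p (-(Γ x v v)) (r ((0:ℝ), x, v)) := by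
      rw [hrt0]
      have := hpd 0 h0I
      rwa [hγ0, hp0] at this
    have h2 := h1.scomp 0 (hrtd 0 h0J)
    rw [hd0] at h2
    exact h2
  have hsmul : HasDerivAt (fun u : ℝ => d u • p (r (u, x, v)))
      (d 0 • ((1:ℝ) • -(Γ x v v)) + deriv d 0 • p (r ((0:ℝ), x, v))) 0 :=
    hdd.hasDerivAt.smul hprd
  have hLHS : deriv (deriv (fun u : ℝ => γ (r (u, x, v)))) 0
      = deriv d 0 • v - Γ x v v := by
    have hevJ : deriv (fun u : ℝ => γ (r (u, x, v))) =ᶠ[nhds (0:ℝ)]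
        (fun u => d u • p (r (u, x, v))) :=
      Filter.eventuallyEq_of_mem (hJopen.mem_nhds h0J) hDeq
    rw [hevJ.deriv_eq, hsmul.deriv, hd0, hrt0, hp0]
    module
  rw [hLHS, hrt0, hγ0, hD0] at hmain
  refine ⟨deriv d 0, ?_⟩
  rw [← neg_neg (((Γhat x) v) v), ← hmain]
  module

theorem stmt0 {n : ℕ} (hn : 1 ≤ n) (U : Set (Vec n)) (hU : IsOpen U)
    (Γ Γhat : Christoffel n)
    (hΓ : ContDiffOn ℝ (⊤ : ℕ∞) Γ U) (hΓhat : ContDiffOn ℝ (⊤ : ℕ∞) Γhat U)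
    (hΓsym : ∀ x ∈ U, ∀ v w : Vec n, Γ x v w = Γ x w v)
    (hΓhatsym : ∀ x ∈ U, ∀ v w : Vec n, Γhat x v w = Γhat x w v)
    (W : Set (ℝ × Vec n × Vec n)) (hWopen : IsOpen W)
    (hWsub : ∀ q ∈ W, q.2.1 ∈ U)
    (hW0 : ∀ x ∈ U, ∀ v : Vec n, ((0 : ℝ), x, v) ∈ W)
    (r : ℝ × Vec n × Vec n → ℝ) (hr : ContDiffOn ℝ (⊤ : ℕ∞) r W)
    (hr0 : ∀ x ∈ U, ∀ v : Vec n, r (0, x, v) = 0)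
    (hr1 : ∀ x ∈ U, ∀ v : Vec n, deriv (fun t => r (t, x, v)) 0 = 1)
    (hrepar : ∀ x ∈ U, ∀ v : Vec n, ∀ I : Set ℝ, IsOpen I → I.OrdConnected →
      (0 : ℝ) ∈ I → ∀ γ : ℝ → Vec n, IsGeodesic Γ U I γ → γ 0 = x →
      deriv γ 0 = v →
      ∀ t : ℝ, (t, x, v) ∈ W → (∀ᶠ s in nhds t, r (s, x, v) ∈ I) →
        deriv (deriv (fun s => γ (r (s, x, v)))) t =
          -(Γhat (γ (r (t, x, v)))
              (deriv (fun s => γ (r (s, x, v))) t)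
              (deriv (fun s => γ (r (s, x, v))) t))) :
    ∃ α : Vec n → (Vec n →L[ℝ] ℝ), ContDiffOn ℝ (⊤ : ℕ∞) α U ∧
      ∀ x ∈ U, ∀ v w : Vec n,
        Γ x v w - Γhat x v w = (1/2 : ℝ) • (α x v • w + α x w • v) := by
  have key := key U hU Γ Γhat hΓ W hWopen hW0 r hr hr0 hr1 hrepar
  obtain ⟨α, hsmooth, hid⟩ := alpha_construction U (fun x => Γ x - Γhat x)
    (hΓ.sub hΓhat)
    (fun x hx v w => by
      simp only [ContinuousLinearMap.sub_apply, ContinuousLinearMap.coe_sub', Pi.sub_apply]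
      rw [hΓsym x hx v w, hΓhatsym x hx v w])
    (fun x hx v => by
      obtain ⟨c, hc⟩ := key x hx v
      exact ⟨c, by
        simp only [ContinuousLinearMap.sub_apply, ContinuousLinearMap.coe_sub', Pi.sub_apply]
        exact hc⟩)
  refine ⟨α, hsmooth, fun x hx v w => ?_⟩
  have := hid x hx v w
  simp only [ContinuousLinearMap.sub_apply, ContinuousLinearMap.coe_sub', Pi.sub_apply] at this
  exact this
end

section
/- Let U ⊆ ℝⁿ be open and let Γ and Γ̂ be symmetric Christoffel fields on U with difference tensor S. Assume there is a smooth map α : U → (ℝⁿ)* such that S(x)(v,w) = (1/2)·(α(x)(v)·w + α(x)(w)·v) for all x ∈ U and v,w ∈ ℝⁿ. Then for every Γ-geodesic γ : I → U with 0 ∈ I there exist ε > 0 and a smooth function r : (-ε,ε) → ℝ with r(0) = 0, r'(0) = 1 and r((-ε,ε)) ⊆ I, such that t ↦ γ(r(t)) is a Γ̂-geodesic on (-ε,ε). -/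
open Set
open Topology

theorem smoothOn_of_hasDerivAt {E : Type*} [NormedAddCommGroup E] [NormedSpace ℝ E]
    {f f' : ℝ → E} {s : Set ℝ} (hs : IsOpen s)
    (hd : ∀ x ∈ s, HasDerivAt f (f' x) x) (hf' : ContDiffOn ℝ (⊤ : ℕ∞) f' s) :
    ContDiffOn ℝ (⊤ : ℕ∞) f s := by
  rw [contDiffOn_infty_iff_deriv_of_isOpen hs]
  exact ⟨fun x hx => (hd x hx).differentiableAt.differentiableWithinAt,
    hf'.congr fun x hx => (hd x hx).deriv⟩

theorem ftc_hasDerivAt {E : Type*} [NormedAddCommGroup E] [NormedSpace ℝ E] [CompleteSpace E]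
    {φ : ℝ → E} {I : Set ℝ} (hIopen : IsOpen I) (hIconn : I.OrdConnected)
    (hI0 : (0:ℝ) ∈ I) (hφ : ContinuousOn φ I) :
    ∀ s ∈ I, HasDerivAt (fun u => ∫ x in (0:ℝ)..u, φ x) (φ s) s := by
  intro s hs
  apply intervalIntegral.integral_hasDerivAt_right
  · exact (hφ.mono (hIconn.uIcc_subset hI0 hs)).intervalIntegrable
  · exact hφ.stronglyMeasurableAtFilter hIopen s hs
  · exact hφ.continuousAt (hIopen.mem_nhds hs)

theorem stmt1 {n : ℕ} (U : Set (Vec n)) (hU : IsOpen U)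
    (Γ Γhat : Christoffel n)
    (hΓ : ContDiffOn ℝ (⊤ : ℕ∞) Γ U) (hΓhat : ContDiffOn ℝ (⊤ : ℕ∞) Γhat U)
    (hΓsym : ∀ x ∈ U, ∀ v w : Vec n, Γ x v w = Γ x w v)
    (hΓhatsym : ∀ x ∈ U, ∀ v w : Vec n, Γhat x v w = Γhat x w v)
    (α : Vec n → (Vec n →L[ℝ] ℝ)) (hα : ContDiffOn ℝ (⊤ : ℕ∞) α U)
    (hS : ∀ x ∈ U, ∀ v w : Vec n,
      Γ x v w - Γhat x v w = (1/2 : ℝ) • (α x v • w + α x w • v))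
    (I : Set ℝ) (hIopen : IsOpen I) (hIconn : I.OrdConnected) (hI0 : (0 : ℝ) ∈ I)
    (γ : ℝ → Vec n) (hγ : IsGeodesic Γ U I γ) :
    ∃ ε > (0 : ℝ), ∃ r : ℝ → ℝ,
      ContDiffOn ℝ (⊤ : ℕ∞) r (Ioo (-ε) ε) ∧
      r 0 = 0 ∧ deriv r 0 = 1 ∧ Set.MapsTo r (Ioo (-ε) ε) I ∧
      IsGeodesic Γhat U (Ioo (-ε) ε) (fun t => γ (r t)) := by
  obtain ⟨hmap, hγ2, hgeo⟩ := hγ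
  have hle : ∀ k : ℕ, (k : WithTop ℕ∞) ≤ ((⊤:ℕ∞) : WithTop ℕ∞) := fun k => by
    exact_mod_cast le_top
  set g : ℝ → Vec n := deriv γ with hgdef
  have hg1 : ContDiffOn ℝ 1 g I := hγ2.deriv_of_isOpen hIopen (by norm_num)
  have hgdiffOn : DifferentiableOn ℝ g I := hg1.differentiableOn one_ne_zero
  have hgk : ∀ k : ℕ, ContDiffOn ℝ k g I := by
    intro k
    induction k with
    | zero => exact hg1.of_le (by exact_mod_cast zero_le_one)
    | succ k ih =>
      have hγk : ContDiffOn ℝ ((k : WithTop ℕ∞) + 1) γ I :=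
        (contDiffOn_succ_iff_deriv_of_isOpen hIopen).2
          ⟨hγ2.differentiableOn (by norm_num), by simp, ih⟩
      have hRHS : ContDiffOn ℝ k (fun t => -(Γ (γ t) (g t) (g t))) I := by
        have h1 : ContDiffOn ℝ k (fun t => Γ (γ t)) I :=
          (hΓ.of_le (hle k)).comp (hγk.of_le le_self_add) hmap
        exact ((h1.clm_apply ih).clm_apply ih).neg
      have hdg : ContDiffOn ℝ k (deriv g) I := hRHS.congr fun t ht => hgeo t ht
      rw [show ((k+1:ℕ) : WithTop ℕ∞) = (k : WithTop ℕ∞) + 1 from by exact_mod_cast rfl]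
      exact (contDiffOn_succ_iff_deriv_of_isOpen hIopen).2 ⟨hgdiffOn, by simp, hdg⟩
  have hγsm : ContDiffOn ℝ (⊤:ℕ∞) γ I :=
    (contDiffOn_infty_iff_deriv_of_isOpen hIopen).2
      ⟨hγ2.differentiableOn (by norm_num), contDiffOn_infty.2 hgk⟩
  have hgsm : ContDiffOn ℝ (⊤:ℕ∞) g I := contDiffOn_infty.2 hgk
  set φ : ℝ → ℝ := fun s => α (γ s) (g s) with hφdef
  have hφsm : ContDiffOn ℝ (⊤:ℕ∞) φ I := (hα.comp hγsm hmap).clm_apply hgsm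
  set F : ℝ → ℝ := fun s => ∫ u in (0:ℝ)..s, φ u with hFdef
  have hFd : ∀ s ∈ I, HasDerivAt F (φ s) s :=
    ftc_hasDerivAt hIopen hIconn hI0 hφsm.continuousOn
  have hFsm : ContDiffOn ℝ (⊤:ℕ∞) F I := smoothOn_of_hasDerivAt hIopen hFd hφsm
  set h : ℝ → ℝ := fun s => Real.exp (-(F s)) with hhdef
  have hhpos : ∀ s, 0 < h s := fun s => Real.exp_pos _
  have hhsm : ContDiffOn ℝ (⊤:ℕ∞) h I := hFsm.neg.exp
  set G : ℝ → ℝ := fun s => ∫ u in (0:ℝ)..s, h u with hGdef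
  have hGd : ∀ s ∈ I, HasDerivAt G (h s) s :=
    ftc_hasDerivAt hIopen hIconn hI0 hhsm.continuousOn
  have hGsm : ContDiffOn ℝ (⊤:ℕ∞) G I := smoothOn_of_hasDerivAt hIopen hGd hhsm
  have hF0 : F 0 = 0 := intervalIntegral.integral_same
  have hh0 : h 0 = 1 := by rw [hhdef]; simp [hF0]
  have hG0 : G 0 = 0 := intervalIntegral.integral_same
  have hGstrict : HasStrictDerivAt G 1 0 := by
    have h1 : ContDiffAt ℝ (⊤:ℕ∞) G 0 := hGsm.contDiffAt (hIopen.mem_nhds hI0)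
    have h2 := h1.hasStrictDerivAt (by simp)
    rwa [(hGd 0 hI0).deriv, hh0] at h2
  have hGF := hGstrict.hasStrictFDerivAt_equiv one_ne_zero
  set Φ := hGF.toOpenPartialHomeomorph G with hΦdef
  have hΦ : ∀ x, Φ x = G x := fun x => congrFun hGF.toOpenPartialHomeomorph_coe x
  have h0s : (0:ℝ) ∈ Φ.source := hGF.mem_toOpenPartialHomeomorph_source
  have h0t : (0:ℝ) ∈ Φ.target := by have := Φ.map_source h0s; rwa [hΦ 0, hG0] at this
  set r : ℝ → ℝ := ⇑Φ.symm with hrdef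
  have hr0 : r 0 = 0 := by
    have := Φ.left_inv h0s
    rwa [hΦ 0, hG0] at this
  have hrcont : ContinuousOn r Φ.target := Φ.continuousOn_symm
  have hrightinv : ∀ t ∈ Φ.target, G (r t) = t := fun t ht => by
    have := Φ.right_inv ht; rwa [hΦ] at this
  have hWopen : IsOpen (Φ.target ∩ r ⁻¹' I) :=
    hrcont.isOpen_inter_preimage Φ.open_target hIopen
  have h0W : (0:ℝ) ∈ Φ.target ∩ r ⁻¹' I := ⟨h0t, by rw [mem_preimage, hr0]; exact hI0⟩
  obtain ⟨ε, hεpos, hball⟩ := Metric.isOpen_iff.1 hWopen 0 h0W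
  have hVsub : Ioo (-ε) ε ⊆ Φ.target ∩ r ⁻¹' I := fun t ht =>
    hball (by rw [Real.ball_eq_Ioo, zero_sub, zero_add]; exact ht)
  have hVopen : IsOpen (Ioo (-ε) ε) := isOpen_Ioo
  have h0V : (0:ℝ) ∈ Ioo (-ε) ε := ⟨neg_lt_zero.2 hεpos, hεpos⟩
  have htT : ∀ t ∈ Ioo (-ε) ε, t ∈ Φ.target := fun t ht => (hVsub ht).1
  have hrI : MapsTo r (Ioo (-ε) ε) I := fun t ht => (hVsub ht).2
  have hrd : ∀ t ∈ Ioo (-ε) ε, HasDerivAt r (h (r t))⁻¹ t := by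
    intro t ht
    refine HasDerivAt.of_local_left_inverse
      (hrcont.continuousAt (Φ.open_target.mem_nhds (htT t ht)))
      (hGd _ (hrI ht)) (ne_of_gt (hhpos _)) ?_
    exact Filter.eventually_of_mem (Φ.open_target.mem_nhds (htT t ht))
      (fun y hy => hrightinv y hy)
  have hrk : ∀ k : ℕ, ContDiffOn ℝ k r (Ioo (-ε) ε) := by
    intro k
    induction k with
    | zero => exact contDiffOn_zero.2 (hrcont.mono (fun t ht => htT t ht))
    | succ k ih =>
      rw [show ((k+1:ℕ) : WithTop ℕ∞) = (k : WithTop ℕ∞) + 1 from by exact_mod_cast rfl]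
      refine (contDiffOn_succ_iff_deriv_of_isOpen hVopen).2
        ⟨fun t ht => (hrd t ht).differentiableAt.differentiableWithinAt, by simp, ?_⟩
      refine ContDiffOn.congr ?_ (fun t ht => (hrd t ht).deriv)
      exact ((hhsm.of_le (hle k)).comp ih hrI).inv (fun t ht => ne_of_gt (hhpos _))
  have hrsm : ContDiffOn ℝ (⊤:ℕ∞) r (Ioo (-ε) ε) := contDiffOn_infty.2 hrk
  have hγd : ∀ {s : ℝ}, s ∈ I → HasDerivAt γ (g s) s := fun {s} hs =>
    ((hγsm.differentiableOn (by simp)).differentiableAt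
      (hIopen.mem_nhds hs)).hasDerivAt
  have hσd : ∀ t ∈ Ioo (-ε) ε,
      HasDerivAt (fun u => γ (r u)) ((h (r t))⁻¹ • g (r t)) t := fun t ht =>
    HasDerivAt.scomp t (hγd (hrI ht)) (hrd t ht)
  have hderivσ : ∀ t ∈ Ioo (-ε) ε,
      deriv (fun u => γ (r u)) t = (h (r t))⁻¹ • g (r t) := fun t ht => (hσd t ht).deriv
  refine ⟨ε, hεpos, r, hrsm, hr0, ?_, hrI, fun t ht => hmap (hrI ht),
    (hγsm.comp hrsm hrI).of_le (by exact_mod_cast le_top), ?_⟩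
  · rw [(hrd 0 h0V).deriv, hr0, hh0, inv_one]
  intro t ht
  have hρI : r t ∈ I := hrI ht
  have hH : h (r t) ≠ 0 := ne_of_gt (hhpos _)
  have hgd : HasDerivAt g (deriv g (r t)) (r t) :=
    ((hgsm.differentiableOn (by simp)).differentiableAt
      (hIopen.mem_nhds hρI)).hasDerivAt
  have hhd : HasDerivAt (fun u => h (r u))
      ((Real.exp (-(F (r t))) * -(φ (r t))) * (h (r t))⁻¹) t :=
    HasDerivAt.comp t ((hFd (r t) hρI).neg.exp) (hrd t ht)
  have hinvd : HasDerivAt (fun u => (h (r u))⁻¹)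
      (-((Real.exp (-(F (r t))) * -(φ (r t))) * (h (r t))⁻¹) / (h (r t))^2) t :=
    hhd.inv hH
  have hgrd : HasDerivAt (fun u => g (r u)) ((h (r t))⁻¹ • deriv g (r t)) t :=
    HasDerivAt.scomp t hgd (hrd t ht)
  have hDd : HasDerivAt (fun u => (h (r u))⁻¹ • g (r u))
      ((h (r t))⁻¹ • ((h (r t))⁻¹ • deriv g (r t))
        + (-((Real.exp (-(F (r t))) * -(φ (r t))) * (h (r t))⁻¹) / (h (r t))^2) • g (r t)) t :=
    hinvd.smul hgrd
  have hev : deriv (fun u => γ (r u)) =ᶠ[𝓝 t] (fun u => (h (r u))⁻¹ • g (r u)) :=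
    Filter.eventually_of_mem (hVopen.mem_nhds ht) hderivσ
  have e1 : deriv (deriv (fun u => γ (r u))) t
      = deriv (fun u => (h (r u))⁻¹ • g (r u)) t := hev.deriv_eq
  rw [e1, hDd.deriv, hderivσ t ht]
  have hgeoρ : deriv g (r t) = -(Γ (γ (r t)) (g (r t)) (g (r t))) := hgeo _ hρI
  have hbil : Γhat (γ (r t)) ((h (r t))⁻¹ • g (r t)) ((h (r t))⁻¹ • g (r t))
      = ((h (r t))⁻¹ * (h (r t))⁻¹) • Γhat (γ (r t)) (g (r t)) (g (r t)) := by
    simp [map_smul, ContinuousLinearMap.smul_apply, smul_smul]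
  have hhat : Γhat (γ (r t)) (g (r t)) (g (r t))
      = Γ (γ (r t)) (g (r t)) (g (r t)) - φ (r t) • g (r t) := by
    have hs' := hS (γ (r t)) (hmap hρI) (g (r t)) (g (r t))
    have h2 : Γhat (γ (r t)) (g (r t)) (g (r t))
        = Γ (γ (r t)) (g (r t)) (g (r t))
          - (Γ (γ (r t)) (g (r t)) (g (r t)) - Γhat (γ (r t)) (g (r t)) (g (r t))) :=
      (sub_sub_cancel _ _).symm
    rw [h2, hs', hφdef]
    module
  have hexp : Real.exp (-(F (r t))) = h (r t) := rfl
  rw [hbil, hhat, hgeoρ, hexp]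
  have hφρ : φ (r t) = α (γ (r t)) (g (r t)) := rfl
  match_scalars <;> field_simp <;> first | rfl | exact Or.inl (by ring)
end

section
/- Let U ⊆ ℝⁿ be open, let Γ and Γ̂ be Christoffel fields on U with difference tensor S, let γ : I → U be a Γ-geodesic on an open interval I, and let r : J → ℝ be a C² function on an open interval J with r(J) ⊆ I. Then the curve t ↦ γ(r(t)) is a Γ̂-geodesic on J if and only if for all t ∈ J one has r''(t)·γ'(r(t)) = (r'(t))²·S(γ(r(t)))(γ'(r(t)), γ'(r(t))) (an equation of vectors in ℝⁿ). -/
open Set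

theorem stmt2 {n : ℕ} (U : Set (Vec n)) (hU : IsOpen U)
    (Γ Γhat : Christoffel n)
    (hΓ : ContDiffOn ℝ (⊤ : ℕ∞) Γ U) (hΓhat : ContDiffOn ℝ (⊤ : ℕ∞) Γhat U)
    (I J : Set ℝ) (hIopen : IsOpen I) (hIconn : I.OrdConnected)
    (hJopen : IsOpen J) (hJconn : J.OrdConnected)
    (γ : ℝ → Vec n) (hγ : IsGeodesic Γ U I γ)
    (r : ℝ → ℝ) (hr : ContDiffOn ℝ (2 : ℕ∞) r J) (hrJ : Set.MapsTo r J I) :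
    IsGeodesic Γhat U J (fun t => γ (r t)) ↔
      ∀ t ∈ J, (deriv (deriv r) t) • deriv γ (r t) =
        (deriv r t) ^ 2 •
          (Γ (γ (r t)) (deriv γ (r t)) (deriv γ (r t)) -
            Γhat (γ (r t)) (deriv γ (r t)) (deriv γ (r t))) := by
  obtain ⟨hγU, hγ2, hγeq⟩ := hγ
  have hγd : ∀ s ∈ I, HasDerivAt γ (deriv γ s) s := fun s hs =>
    ((hγ2.differentiableOn (by norm_num)).differentiableAt (hIopen.mem_nhds hs)).hasDerivAt
  have hγ'c : ContDiffOn ℝ 1 (deriv γ) I := hγ2.deriv_of_isOpen hIopen (by norm_num)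
  have hγ'd : ∀ s ∈ I, HasDerivAt (deriv γ) (deriv (deriv γ) s) s := fun s hs =>
    ((hγ'c.differentiableOn (by norm_num)).differentiableAt (hIopen.mem_nhds hs)).hasDerivAt
  have hrd : ∀ t ∈ J, HasDerivAt r (deriv r t) t := fun t ht =>
    ((hr.differentiableOn (by norm_num)).differentiableAt (hJopen.mem_nhds ht)).hasDerivAt
  have hr'c : ContDiffOn ℝ 1 (deriv r) J := hr.deriv_of_isOpen hJopen (by norm_num)
  have hr'd : ∀ t ∈ J, HasDerivAt (deriv r) (deriv (deriv r) t) t := fun t ht =>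
    ((hr'c.differentiableOn (by norm_num)).differentiableAt (hJopen.mem_nhds ht)).hasDerivAt
  have hg1 : ∀ t ∈ J, HasDerivAt (fun t => γ (r t)) (deriv r t • deriv γ (r t)) t :=
    fun t ht => (hγd _ (hrJ ht)).scomp t (hrd t ht)
  have hgd : ∀ t ∈ J, deriv (fun t => γ (r t)) t = deriv r t • deriv γ (r t) :=
    fun t ht => (hg1 t ht).deriv
  have hg2 : ∀ t ∈ J, deriv (deriv (fun t => γ (r t))) t =
      deriv (deriv r) t • deriv γ (r t) + (deriv r t) ^ 2 • deriv (deriv γ) (r t) := by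
    intro t ht
    have heq : deriv (fun t => γ (r t)) =ᶠ[nhds t] fun t => deriv r t • deriv γ (r t) :=
      Filter.eventuallyEq_of_mem (hJopen.mem_nhds ht) hgd
    have h1 : HasDerivAt (fun t => deriv γ (r t)) (deriv r t • deriv (deriv γ) (r t)) t :=
      (hγ'd _ (hrJ ht)).scomp t (hrd t ht)
    have h2 : HasDerivAt (fun t => deriv r t • deriv γ (r t))
        (deriv r t • deriv r t • deriv (deriv γ) (r t) + deriv (deriv r) t • deriv γ (r t)) t :=
      (hr'd t ht).smul h1
    rw [Filter.EventuallyEq.deriv_eq heq, h2.deriv, smul_smul, ← sq]; exact add_comm _ _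
  constructor
  · rintro ⟨-, -, hgeo⟩ t ht
    have h := hgeo t ht
    rw [hg2 t ht, hgd t ht, hγeq _ (hrJ ht)] at h
    simp only [map_smul, ContinuousLinearMap.smul_apply, smul_smul, ← sq] at h
    rw [smul_sub]
    linear_combination (norm := module) h
  · intro h
    refine ⟨fun t ht => hγU (hrJ ht), hγ2.comp hr hrJ, fun t ht => ?_⟩
    have h' := h t ht
    rw [smul_sub] at h'
    rw [hg2 t ht, hgd t ht, hγeq _ (hrJ ht)]
    simp only [map_smul, ContinuousLinearMap.smul_apply, smul_smul, ← sq]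
    linear_combination (norm := module) h'
end

section
/- Let U ⊆ ℝⁿ be open, let Γ and Γ̂ be Christoffel fields on U with difference tensor S, and let γ : I → U be a Γ-geodesic on an open interval I ∋ 0 with γ(0) = x and γ'(0) = v. Let r : J → ℝ be a C² function on an open interval J ∋ 0 with r(0) = 0, r'(0) = 1, r(J) ⊆ I, and satisfying r''(t)·γ'(r(t)) = (r'(t))²·S(γ(r(t)))(γ'(r(t)), γ'(r(t))) for all t ∈ J. If δ : K → U is any Γ̂-geodesic on an open interval K ∋ 0 with δ(0) = x and δ'(0) = v, then δ(t) = γ(r(t)) for all t ∈ J ∩ K. -/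
open Set Topology Filter

theorem stmt3 {n : ℕ} (U : Set (Vec n)) (hU : IsOpen U)
    (Γ Γhat : Christoffel n)
    (hΓ : ContDiffOn ℝ (⊤ : ℕ∞) Γ U) (hΓhat : ContDiffOn ℝ (⊤ : ℕ∞) Γhat U)
    (I J K : Set ℝ)
    (hIopen : IsOpen I) (hIconn : I.OrdConnected) (hI0 : (0 : ℝ) ∈ I)
    (hJopen : IsOpen J) (hJconn : J.OrdConnected) (hJ0 : (0 : ℝ) ∈ J)
    (hKopen : IsOpen K) (hKconn : K.OrdConnected) (hK0 : (0 : ℝ) ∈ K)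
    (x v : Vec n)
    (γ : ℝ → Vec n) (hγ : IsGeodesic Γ U I γ)
    (hγ0 : γ 0 = x) (hγ'0 : deriv γ 0 = v)
    (r : ℝ → ℝ) (hr : ContDiffOn ℝ (2 : ℕ∞) r J)
    (hr0 : r 0 = 0) (hr'0 : deriv r 0 = 1) (hrJ : Set.MapsTo r J I)
    (hreq : ∀ t ∈ J, (deriv (deriv r) t) • deriv γ (r t) =
      (deriv r t) ^ 2 •
        (Γ (γ (r t)) (deriv γ (r t)) (deriv γ (r t)) -
          Γhat (γ (r t)) (deriv γ (r t)) (deriv γ (r t))))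
    (δ : ℝ → Vec n) (hδ : IsGeodesic Γhat U K δ)
    (hδ0 : δ 0 = x) (hδ'0 : deriv δ 0 = v) :
    ∀ t ∈ J ∩ K, δ t = γ (r t) := by
  obtain ⟨hγU, hγC, hγE⟩ := hγ
  obtain ⟨hδU, hδC, hδE⟩ := hδ
  -- basic differentiability facts
  have hγ'C : ContDiffOn ℝ 1 (deriv γ) I :=
    hγC.deriv_of_isOpen hIopen (by norm_num)
  have hδ'C : ContDiffOn ℝ 1 (deriv δ) K :=
    hδC.deriv_of_isOpen hKopen (by norm_num)
  have hr'C : ContDiffOn ℝ 1 (deriv r) J :=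
    hr.deriv_of_isOpen hJopen (by norm_num)
  have hγd : ∀ t ∈ I, HasDerivAt γ (deriv γ t) t := fun t ht =>
    ((hγC.differentiableOn (by norm_num)).differentiableAt (hIopen.mem_nhds ht)).hasDerivAt
  have hγ'd : ∀ t ∈ I, HasDerivAt (deriv γ) (deriv (deriv γ) t) t := fun t ht =>
    ((hγ'C.differentiableOn (by norm_num)).differentiableAt (hIopen.mem_nhds ht)).hasDerivAt
  have hδd : ∀ t ∈ K, HasDerivAt δ (deriv δ t) t := fun t ht =>
    ((hδC.differentiableOn (by norm_num)).differentiableAt (hKopen.mem_nhds ht)).hasDerivAt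
  have hδ'd : ∀ t ∈ K, HasDerivAt (deriv δ) (deriv (deriv δ) t) t := fun t ht =>
    ((hδ'C.differentiableOn (by norm_num)).differentiableAt (hKopen.mem_nhds ht)).hasDerivAt
  have hrd : ∀ t ∈ J, HasDerivAt r (deriv r t) t := fun t ht =>
    ((hr.differentiableOn (by norm_num)).differentiableAt (hJopen.mem_nhds ht)).hasDerivAt
  have hr'd : ∀ t ∈ J, HasDerivAt (deriv r) (deriv (deriv r) t) t := fun t ht =>
    ((hr'C.differentiableOn (by norm_num)).differentiableAt (hJopen.mem_nhds ht)).hasDerivAt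
  -- the first-order system
  set F : (Vec n × Vec n) → (Vec n × Vec n) :=
    fun p => (p.2, -(Γhat p.1 p.2 p.2)) with hFdef
  set u : ℝ → Vec n × Vec n := fun t => (δ t, deriv δ t) with hudef
  set w : ℝ → Vec n × Vec n := fun t => (γ (r t), deriv r t • deriv γ (r t)) with hwdef
  have hud : ∀ t ∈ K, HasDerivAt u (F (u t)) t := by
    intro t ht
    have h2 := hδ'd t ht
    rw [hδE t ht] at h2
    exact (hδd t ht).prodMk h2
  have hwd : ∀ t ∈ J, HasDerivAt w (F (w t)) t := by
    intro t ht
    have hrt : r t ∈ I := hrJ ht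
    have h1 : HasDerivAt (fun s => γ (r s)) (deriv r t • deriv γ (r t)) t :=
      (hγd _ hrt).scomp t (hrd t ht)
    have h2 : HasDerivAt (fun s => deriv γ (r s)) (deriv r t • deriv (deriv γ) (r t)) t :=
      (hγ'd _ hrt).scomp t (hrd t ht)
    have h3 := (hr'd t ht).smul h2
    rw [hγE _ hrt] at h3
    have key : deriv r t • (deriv r t • -(Γ (γ (r t)) (deriv γ (r t)) (deriv γ (r t)))) +
        deriv (deriv r) t • deriv γ (r t)
        = -(Γhat (γ (r t)) (deriv r t • deriv γ (r t)) (deriv r t • deriv γ (r t))) := by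
      have e1 : Γhat (γ (r t)) (deriv r t • deriv γ (r t)) (deriv r t • deriv γ (r t))
          = (deriv r t) ^ 2 • Γhat (γ (r t)) (deriv γ (r t)) (deriv γ (r t)) := by
        simp only [map_smul, ContinuousLinearMap.smul_apply, smul_smul, pow_two]
      rw [e1, hreq t ht, smul_sub]
      module
    rw [key] at h3
    exact h1.prodMk h3
  -- smoothness of F near points over U
  have hFc : ∀ p : Vec n × Vec n, p.1 ∈ U → ContDiffAt ℝ 1 F p := by
    intro p hp
    have h1 : ContDiffAt ℝ 1 (fun q : Vec n × Vec n => Γhat q.1) p :=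
      ((hΓhat.contDiffAt (hU.mem_nhds hp)).of_le (by exact_mod_cast le_top)).comp p contDiffAt_fst
    have h2 : ContDiffAt ℝ 1 (fun q : Vec n × Vec n => Γhat q.1 q.2) p :=
      h1.clm_apply contDiffAt_snd
    have h3 : ContDiffAt ℝ 1 (fun q : Vec n × Vec n => Γhat q.1 q.2 q.2) p :=
      h2.clm_apply contDiffAt_snd
    exact contDiffAt_snd.prodMk h3.neg
  -- local uniqueness
  have key : ∀ t₀ ∈ J ∩ K, u t₀ = w t₀ → ∀ᶠ t in 𝓝 t₀, u t = w t := by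
    intro t₀ ht₀ hEq
    have hp1 : (u t₀).1 ∈ U := hδU ht₀.2
    obtain ⟨L, s, hs, hlip⟩ := (hFc (u t₀) hp1).exists_lipschitzOnWith
    have hus : ∀ᶠ t in 𝓝 t₀, u t ∈ s :=
      ((hud t₀ ht₀.2).continuousAt).preimage_mem_nhds hs
    have hws : ∀ᶠ t in 𝓝 t₀, w t ∈ s :=
      ((hwd t₀ ht₀.1).continuousAt).preimage_mem_nhds (hEq ▸ hs)
    have hKev : ∀ᶠ t in 𝓝 t₀, t ∈ K := hKopen.mem_nhds ht₀.2
    have hJev : ∀ᶠ t in 𝓝 t₀, t ∈ J := hJopen.mem_nhds ht₀.1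
    have hf : ∀ᶠ t in 𝓝 t₀, HasDerivAt u (F (u t)) t ∧ u t ∈ s := by
      filter_upwards [hus, hKev] with t h1 h2
      exact ⟨hud t h2, h1⟩
    have hg : ∀ᶠ t in 𝓝 t₀, HasDerivAt w (F (w t)) t ∧ w t ∈ s := by
      filter_upwards [hws, hJev] with t h1 h2
      exact ⟨hwd t h2, h1⟩
    exact ODE_solution_unique_of_eventually (v := fun _ => F) (s := fun _ => s)
      (Filter.Eventually.of_forall fun _ => hlip) hf hg hEq
  -- connectedness argument
  have h00 : u 0 = w 0 := by
    simp only [hudef, hwdef, hr0, hr'0, hγ0, hγ'0, hδ0, hδ'0, one_smul]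
  have hW : IsPreconnected (J ∩ K) := (hJconn.inter hKconn).isPreconnected
  set A : Set ℝ := {t | t ∈ J ∩ K ∧ u t = w t} with hAdef
  set B : Set ℝ := {t | t ∈ J ∩ K ∧ u t ≠ w t} with hBdef
  have hAopen : IsOpen A := by
    rw [isOpen_iff_mem_nhds]
    rintro t₀ ⟨ht₀, hEq⟩
    filter_upwards [key t₀ ht₀ hEq, (hJopen.inter hKopen).mem_nhds ht₀] with t h1 h2
    exact ⟨h2, h1⟩
  have hBopen : IsOpen B := by
    rw [isOpen_iff_mem_nhds]
    rintro t₀ ⟨ht₀, hne⟩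
    have hc : ContinuousAt (fun t => (u t, w t)) t₀ :=
      ((hud t₀ ht₀.2).continuousAt).prodMk ((hwd t₀ ht₀.1).continuousAt)
    have hopen : IsOpen {p : (Vec n × Vec n) × (Vec n × Vec n) | p.1 ≠ p.2} :=
      isClosed_diagonal.isOpen_compl
    have hne' : ∀ᶠ t in 𝓝 t₀, u t ≠ w t :=
      hc.preimage_mem_nhds (hopen.mem_nhds hne)
    filter_upwards [hne', (hJopen.inter hKopen).mem_nhds ht₀] with t h1 h2
    exact ⟨h2, h1⟩
  intro t ht
  by_contra hne0
  have hne : u t ≠ w t := fun h => hne0 (congrArg Prod.fst h)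
  obtain ⟨z, _, hzA, hzB⟩ := hW A B hAopen hBopen
    (fun z hz => by
      by_cases h : u z = w z
      · exact Or.inl ⟨hz, h⟩
      · exact Or.inr ⟨hz, h⟩)
    ⟨0, ⟨hJ0, hK0⟩, ⟨hJ0, hK0⟩, h00⟩ ⟨t, ht, ht, hne⟩
  exact hzB.2 hzA.2
end

section
/- Let U ⊆ ℝⁿ be open, let Γ and Γ̂ be Christoffel fields on U with difference tensor S, let γ : I → U be a Γ-geodesic on an open interval I ∋ 0 with γ(0) = x and γ'(0) = v, and let r : J → ℝ be a C² function on an open interval J ∋ 0 with r(0) = 0, r'(0) = 1 and r(J) ⊆ I. If t ↦ γ(r(t)) is a Γ̂-geodesic on J, then r''(0)·v = S(x)(v,v). -/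
open Set

theorem stmt4 {n : ℕ} (U : Set (Vec n)) (hU : IsOpen U)
    (Γ Γhat : Christoffel n)
    (hΓ : ContDiffOn ℝ (⊤ : ℕ∞) Γ U) (hΓhat : ContDiffOn ℝ (⊤ : ℕ∞) Γhat U)
    (I J : Set ℝ)
    (hIopen : IsOpen I) (hIconn : I.OrdConnected) (hI0 : (0 : ℝ) ∈ I)
    (hJopen : IsOpen J) (hJconn : J.OrdConnected) (hJ0 : (0 : ℝ) ∈ J)
    (x v : Vec n)
    (γ : ℝ → Vec n) (hγ : IsGeodesic Γ U I γ)
    (hγ0 : γ 0 = x) (hγ'0 : deriv γ 0 = v)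
    (r : ℝ → ℝ) (hr : ContDiffOn ℝ (2 : ℕ∞) r J)
    (hr0 : r 0 = 0) (hr'0 : deriv r 0 = 1) (hrJ : Set.MapsTo r J I)
    (hgeo : IsGeodesic Γhat U J (fun t => γ (r t))) :
    (deriv (deriv r) 0) • v = Γ x v v - Γhat x v v := by
  set c : ℝ → Vec n := fun t => γ (r t) with hc
  -- differentiability facts
  have hγdiff : ∀ s ∈ I, DifferentiableAt ℝ γ s := fun s hs =>
    (hγ.2.1.contDiffAt (hIopen.mem_nhds hs)).differentiableAt (by norm_num)
  have hrdiff : ∀ s ∈ J, DifferentiableAt ℝ r s := fun s hs =>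
    (hr.contDiffAt (hJopen.mem_nhds hs)).differentiableAt (by norm_num)
  have hγ'cd : ContDiffOn ℝ (1 : ℕ∞) (deriv γ) I :=
    hγ.2.1.deriv_of_isOpen hIopen (by norm_num)
  have hr'cd : ContDiffOn ℝ (1 : ℕ∞) (deriv r) J :=
    hr.deriv_of_isOpen hJopen (by norm_num)
  have hγ'diff : DifferentiableAt ℝ (deriv γ) 0 :=
    (hγ'cd.contDiffAt (hIopen.mem_nhds hI0)).differentiableAt (by norm_num)
  have hr'diff : DifferentiableAt ℝ (deriv r) 0 :=
    (hr'cd.contDiffAt (hJopen.mem_nhds hJ0)).differentiableAt (by norm_num)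
  -- chain rule eventually near 0
  have hrcontAt : ContinuousAt r 0 :=
    hr.continuousOn.continuousAt (hJopen.mem_nhds hJ0)
  have hev : ∀ᶠ t in nhds 0, t ∈ J ∧ r t ∈ I := by
    filter_upwards [hJopen.mem_nhds hJ0,
      hrcontAt.preimage_mem_nhds (by rw [hr0]; exact hIopen.mem_nhds hI0)] with t h1 h2
    exact ⟨h1, h2⟩
  have hcd : ∀ᶠ t in nhds 0, deriv c t = deriv r t • deriv γ (r t) := by
    filter_upwards [hev] with t ⟨htJ, htI⟩
    exact (((hγdiff _ htI).hasDerivAt).scomp t ((hrdiff _ htJ).hasDerivAt)).deriv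
  -- deriv c 0 = v
  have hdc0 : deriv c 0 = v := by
    rw [hcd.self_of_nhds, hr'0, hr0, hγ'0, one_smul]
  -- second derivative of γ at 0
  have hγ''0 : deriv (deriv γ) 0 = -(Γ x v v) := by
    have := hγ.2.2 0 hI0
    rwa [hγ0, hγ'0] at this
  -- second derivative of c at 0 via product+chain rule
  have hprod : HasDerivAt (fun t => deriv r t • deriv γ (r t))
      (deriv r 0 • (deriv r 0 • deriv (deriv γ) (r 0)) + deriv (deriv r) 0 • deriv γ (r 0)) 0 := by
    have h1 : HasDerivAt (fun t => deriv γ (r t)) (deriv r 0 • deriv (deriv γ) (r 0)) 0 := by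
      have hg : HasDerivAt (deriv γ) (deriv (deriv γ) (r 0)) (r 0) := by
        rw [hr0]; exact hγ'diff.hasDerivAt
      exact hg.scomp 0 (hrdiff 0 hJ0).hasDerivAt
    exact hr'diff.hasDerivAt.smul h1
  have hddc : deriv (deriv c) 0 =
      deriv r 0 • (deriv r 0 • deriv (deriv γ) (r 0)) + deriv (deriv r) 0 • deriv γ (r 0) := by
    rw [Filter.EventuallyEq.deriv_eq hcd]
    exact hprod.deriv
  have hgeoeq := hgeo.2.2 0 hJ0
  have hc0 : c 0 = x := by simp [hc, hr0, hγ0]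
  rw [show deriv (fun t => γ (r t)) = deriv c from rfl, hdc0, hc0] at hgeoeq
  rw [hddc, hr'0, hr0, hγ''0, hγ'0, one_smul, one_smul] at hgeoeq
  have : deriv (deriv r) 0 • v = -(Γhat x v v) + Γ x v v := by
    rw [← hgeoeq]; abel
  rw [this]; abel
end

section
/- Let U ⊆ ℝᵐ be open and n ≥ 1. Let S : U → Bil(ℝⁿ × ℝⁿ, ℝⁿ) be a smooth map into the space of bilinear maps ℝⁿ × ℝⁿ → ℝⁿ such that S(x) is symmetric for each x ∈ U, and let h : U × ℝⁿ → ℝ be a smooth function such that S(x)(v,v) = h(x,v)·v for all x ∈ U and v ∈ ℝⁿ. Then there exists a unique smooth map α : U → (ℝⁿ)* (into the dual space of ℝⁿ) such that h(x,v) = α(x)(v) for all x ∈ U, v ∈ ℝⁿ, and S(x)(v,w) = (1/2)·(α(x)(v)·w + α(x)(w)·v) for all x ∈ U and v,w ∈ ℝⁿ. -/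
open Set

theorem stmt5 {m n : ℕ} (hn : 1 ≤ n) (U : Set (Vec m)) (hU : IsOpen U)
    (S : Vec m → Vec n →L[ℝ] Vec n →L[ℝ] Vec n)
    (hS : ContDiffOn ℝ (⊤ : ℕ∞) S U)
    (hSsym : ∀ x ∈ U, ∀ v w : Vec n, S x v w = S x w v)
    (h : Vec m × Vec n → ℝ)
    (hh : ContDiffOn ℝ (⊤ : ℕ∞) h (U ×ˢ (univ : Set (Vec n))))
    (hSh : ∀ x ∈ U, ∀ v : Vec n, S x v v = h (x, v) • v) :
    ∃ α : Vec m → (Vec n →L[ℝ] ℝ),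
      (ContDiffOn ℝ (⊤ : ℕ∞) α U ∧
        (∀ x ∈ U, ∀ v : Vec n, h (x, v) = α x v) ∧
        (∀ x ∈ U, ∀ v w : Vec n,
          S x v w = (1/2 : ℝ) • (α x v • w + α x w • v))) ∧
      ∀ β : Vec m → (Vec n →L[ℝ] ℝ),
        (ContDiffOn ℝ (⊤ : ℕ∞) β U ∧
          (∀ x ∈ U, ∀ v : Vec n, h (x, v) = β x v) ∧
          (∀ x ∈ U, ∀ v w : Vec n,
            S x v w = (1/2 : ℝ) • (β x v • w + β x w • v))) →
        Set.EqOn α β U := by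
  classical
  have hv0 : ((fun _ => (1:ℝ)) : Vec n) ≠ 0 := by
    intro hcon
    have := congrFun hcon ⟨0, hn⟩
    simp at this
  -- homogeneity for t ≠ 0, v ≠ 0
  have hom' : ∀ x ∈ U, ∀ t : ℝ, t ≠ 0 → ∀ v : Vec n, v ≠ 0 →
      h (x, t • v) = t * h (x, v) := by
    intro x hx t ht v hv
    have e1 : h (x, t • v) • (t • v) = (t * t) • (h (x, v) • v) := by
      rw [← hSh x hx, ← hSh x hx]
      simp only [map_smul, ContinuousLinearMap.smul_apply, smul_smul]
    rw [smul_smul, smul_smul] at e1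
    have e3 : h (x, t • v) * t = t * t * h (x, v) := smul_left_injective ℝ hv e1
    apply mul_right_cancel₀ ht
    rw [e3]; ring
  -- h (x, 0) = 0
  have h0 : ∀ x ∈ U, h (x, (0 : Vec n)) = 0 := by
    intro x hx
    set v₀ : Vec n := fun _ => 1 with hv₀def
    have hAt : ContinuousAt h (x, (0:ℝ) • v₀) := by
      rw [zero_smul]
      exact hh.continuousOn.continuousAt
        ((hU.prod isOpen_univ).mem_nhds ⟨hx, mem_univ _⟩)
    have hcurve : Continuous fun t : ℝ => ((x, t • v₀) : Vec m × Vec n) :=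
      continuous_const.prodMk (continuous_id.smul continuous_const)
    have t1 : Filter.Tendsto (fun t : ℝ => h (x, t • v₀)) (nhdsWithin 0 {0}ᶜ)
        (nhds (h (x, (0:ℝ) • v₀))) := by
      have hcv : Filter.Tendsto (fun t : ℝ => ((x, t • v₀) : Vec m × Vec n))
          (nhdsWithin 0 {0}ᶜ) (nhds (x, (0:ℝ) • v₀)) :=
        (hcurve.tendsto (0:ℝ)).mono_left nhdsWithin_le_nhds
      simpa [Function.comp_def] using hAt.tendsto.comp hcv
    have t2 : Filter.Tendsto (fun t : ℝ => h (x, t • v₀)) (nhdsWithin 0 {0}ᶜ)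
        (nhds 0) := by
      have tm : Filter.Tendsto (fun t : ℝ => t * h (x, v₀)) (nhdsWithin 0 {0}ᶜ)
          (nhds 0) := by
        have := (continuous_id.mul (continuous_const (y := h (x, v₀)))).tendsto (0:ℝ)
        simpa [Pi.mul_def] using this.mono_left nhdsWithin_le_nhds
      refine tm.congr' ?_
      filter_upwards [self_mem_nhdsWithin] with t ht
      exact (hom' x hx t ht v₀ hv0).symm
    have := tendsto_nhds_unique t1 t2
    rwa [zero_smul] at this
  -- full homogeneity
  have hom : ∀ x ∈ U, ∀ t : ℝ, ∀ v : Vec n, h (x, t • v) = t * h (x, v) := by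
    intro x hx t v
    by_cases hv : v = 0
    · subst hv; rw [smul_zero, h0 x hx, mul_zero]
    by_cases ht : t = 0
    · subst ht; rw [zero_smul, h0 x hx, zero_mul]
    exact hom' x hx t ht v hv
  -- expansion of S on sums
  have expand : ∀ x : Vec m, ∀ v w : Vec n,
      S x (v + w) (v + w) = S x v v + S x v w + S x w v + S x w w := by
    intro x v w
    simp only [map_add, ContinuousLinearMap.add_apply]
    abel
  -- additivity
  have hadd : ∀ x ∈ U, ∀ v w : Vec n, h (x, v + w) = h (x, v) + h (x, w) := by
    intro x hx v w
    by_cases hdep : LinearIndependent ℝ ![v, w]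
    · -- polarization
      have e1 : h (x, v + w) • (v + w)
          = h (x, v) • v + S x v w + S x w v + h (x, w) • w := by
        rw [← hSh x hx, ← hSh x hx, ← hSh x hx]; exact expand x v w
      have hw' : S x (-w) (-w) = h (x, w) • w := by
        simp only [map_neg, ContinuousLinearMap.neg_apply, neg_neg]
        exact hSh x hx w
      have hvw' : S x v (-w) = -(S x v w) := map_neg (S x v) w
      have hwv' : S x (-w) v = -(S x w v) := by
        simp only [map_neg, ContinuousLinearMap.neg_apply]
      have e2 : h (x, v + -w) • (v + -w)
          = h (x, v) • v - S x v w - S x w v + h (x, w) • w := by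
        have t := expand x v (-w)
        rw [hSh x hx (v + -w), hSh x hx v, hw', hvw', hwv'] at t
        rw [t]; abel
      have e3 : (h (x, v + w) + h (x, v - w) - 2 * h (x, v)) • v
          + (h (x, v + w) - h (x, v - w) - 2 * h (x, w)) • w = 0 := by
        have esum : h (x, v + w) • (v + w) + h (x, v - w) • (v - w)
            = ((2:ℝ) * h (x, v)) • v + ((2:ℝ) * h (x, w)) • w := by
          rw [sub_eq_add_neg v w, e1, e2]
          funext j
          simp only [Pi.add_apply, Pi.sub_apply, Pi.neg_apply, Pi.smul_apply,
            smul_eq_mul]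
          ring
        funext j
        have hj := congrFun esum j
        simp only [Pi.add_apply, Pi.sub_apply, Pi.smul_apply, smul_eq_mul,
          Pi.zero_apply] at hj ⊢
        ring_nf at hj ⊢
        linarith
      obtain ⟨hA, hB⟩ := (LinearIndependent.pair_iff.mp hdep) _ _ e3
      linarith
    · rw [linearIndependent_fin2] at hdep
      push_neg at hdep
      simp only [Matrix.cons_val_one, Matrix.head_cons, Matrix.cons_val_zero] at hdep
      by_cases hw : w = 0
      · subst hw; rw [add_zero, h0 x hx, add_zero]
      obtain ⟨a, ha⟩ := hdep hw
      have hvw : v + w = (a + 1) • w := by rw [add_smul, one_smul, ha]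
      rw [hvw, hom x hx, ← ha, hom x hx]
      ring
  -- representation
  have hrep : ∀ x ∈ U, ∀ v : Vec n,
      h (x, v) = ∑ i, v i * h (x, Pi.single i 1) := by
    intro x hx v
    let F : Vec n →+ ℝ := AddMonoidHom.mk' (fun v => h (x, v)) (hadd x hx)
    have hFv : h (x, v) = F v := rfl
    have hvdec : v = ∑ i, v i • (Pi.single i 1 : Vec n) := by
      funext j
      simp [Pi.single_apply, Finset.sum_apply]
    rw [hFv]
    conv_lhs => rw [hvdec]
    rw [map_sum]
    refine Finset.sum_congr rfl fun i _ => ?_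
    show h (x, v i • (Pi.single i 1 : Vec n)) = _
    rw [hom x hx]
  -- the candidate α
  set α : Vec m → (Vec n →L[ℝ] ℝ) := fun x =>
    ∑ i, h (x, (Pi.single i 1 : Vec n)) • (ContinuousLinearMap.proj i : Vec n →L[ℝ] ℝ)
    with hαdef
  have hαapp : ∀ x : Vec m, ∀ v : Vec n,
      α x v = ∑ i, v i * h (x, Pi.single i 1) := by
    intro x v
    rw [hαdef]
    simp only [ContinuousLinearMap.coe_sum', Finset.sum_apply,
      ContinuousLinearMap.coe_smul', Pi.smul_apply, ContinuousLinearMap.proj_apply,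
      smul_eq_mul]
    exact Finset.sum_congr rfl fun i _ => mul_comm _ _
  have heq : ∀ x ∈ U, ∀ v : Vec n, h (x, v) = α x v := by
    intro x hx v
    rw [hαapp, hrep x hx]
  refine ⟨α, ⟨?_, heq, ?_⟩, ?_⟩
  · -- smoothness
    apply ContDiffOn.sum
    intro i _
    have hcomp : ContDiffOn ℝ (⊤ : ℕ∞)
        (fun x : Vec m => h (x, (Pi.single i 1 : Vec n))) U := by
      apply hh.comp ((contDiff_id.prodMk contDiff_const).contDiffOn)
      intro x hx
      exact ⟨hx, mem_univ _⟩
    exact hcomp.smul contDiffOn_const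
  · -- formula for S
    intro x hx v w
    have key : S x v w + S x w v = h (x, v) • w + h (x, w) • v := by
      have e1 : h (x, v + w) • (v + w)
          = h (x, v) • v + S x v w + S x w v + h (x, w) • w := by
        rw [← hSh x hx, ← hSh x hx, ← hSh x hx]; exact expand x v w
      rw [hadd x hx] at e1
      funext j
      have hj := congrFun e1 j
      simp only [Pi.add_apply, Pi.smul_apply, smul_eq_mul] at hj ⊢
      ring_nf at hj ⊢
      linarith
    have hsym := hSsym x hx v w
    rw [← heq x hx v, ← heq x hx w]
    funext j
    have hk := congrFun key j
    have hs := congrFun hsym j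
    simp only [Pi.add_apply, Pi.smul_apply, smul_eq_mul] at hk hs ⊢
    linarith
  · -- uniqueness
    intro β ⟨_, hβ, _⟩ x hx
    ext v
    rw [← heq x hx v, hβ x hx v]
end

section
/- Let E be a nonzero finite-dimensional real normed vector space, let S : E × E → E be a symmetric bilinear map, and let h : E → ℝ be a continuous function such that S(v,v) = h(v)·v for all v ∈ E. Then h is linear, and S(v,w) = (1/2)·(h(v)·w + h(w)·v) for all v,w ∈ E. -/
theorem stmt6 {E : Type*} [NormedAddCommGroup E] [NormedSpace ℝ E]
    [FiniteDimensional ℝ E] [Nontrivial E]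
    (S : E →ₗ[ℝ] E →ₗ[ℝ] E) (hSsym : ∀ v w : E, S v w = S w v)
    (h : E → ℝ) (hh : Continuous h)
    (hS : ∀ v : E, S v v = h v • v) :
    IsLinearMap ℝ h ∧ ∀ v w : E, S v w = (1/2 : ℝ) • (h v • w + h w • v) := by
  -- homogeneity for nonzero scalar and vector
  have homog' : ∀ (t : ℝ) (v : E), v ≠ 0 → t ≠ 0 → h (t • v) = t * h v := by
    intro t v hv ht
    have e1 : S (t • v) (t • v) = (t * t * h v) • v := by
      simp only [map_smul, LinearMap.smul_apply, hS v, smul_smul, mul_assoc]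
    have e2 : S (t • v) (t • v) = (h (t • v) * t) • v := by
      rw [hS (t • v), smul_smul]
    have key := smul_left_injective ℝ hv (e1.symm.trans e2)
    exact mul_right_cancel₀ ht (by linear_combination -key)
  have h0 : h 0 = 0 := by
    obtain ⟨v, hv⟩ := exists_ne (0 : E)
    have c1 : Filter.Tendsto (fun t : ℝ => h (t • v)) (nhdsWithin 0 {0}ᶜ) (nhds (h 0)) := by
      have : Filter.Tendsto (fun t : ℝ => h (t • v)) (nhds 0) (nhds (h ((0:ℝ) • v))) :=
        (hh.comp (continuous_id.smul continuous_const)).tendsto 0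
      rw [zero_smul] at this
      exact this.mono_left nhdsWithin_le_nhds
    have c2 : Filter.Tendsto (fun t : ℝ => h (t • v)) (nhdsWithin 0 {0}ᶜ) (nhds 0) := by
      have : Filter.Tendsto (fun t : ℝ => t * h v) (nhdsWithin 0 {0}ᶜ) (nhds 0) := by
        have := (show Continuous (fun t : ℝ => t * h v) from continuous_id.mul (continuous_const (y := h v))).tendsto (0:ℝ)
        simpa using this.mono_left nhdsWithin_le_nhds
      refine this.congr' ?_
      filter_upwards [self_mem_nhdsWithin] with t ht
      exact (homog' t v hv ht).symm
    exact tendsto_nhds_unique c1 c2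
  have homog : ∀ (t : ℝ) (v : E), h (t • v) = t * h v := by
    intro t v
    by_cases hv : v = 0
    · simp [hv, h0]
    by_cases ht : t = 0
    · simp [ht, h0]
    exact homog' t v hv ht
  -- additivity
  have hadd : ∀ v w : E, h (v + w) = h v + h w := by
    intro v w
    by_cases hv : v = 0
    · simp [hv, h0]
    by_cases hcv : ∃ c : ℝ, w = c • v
    · obtain ⟨c, rfl⟩ := hcv
      have : v + c • v = (1 + c) • v := by module
      rw [this, homog, homog, add_mul, one_mul]
    -- genuinely independent case
    have e1 : S v v + S v w + S w v + S w w = h (v + w) • (v + w) := by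
      have := hS (v + w)
      simp only [map_add, LinearMap.add_apply] at this
      linear_combination (norm := module) this
    have e2 : S v v - S v w - S w v + S w w = h (v - w) • (v - w) := by
      have := hS (v - w)
      simp only [map_sub, LinearMap.sub_apply] at this
      linear_combination (norm := module) this
    rw [hS v, hS w] at e1 e2
    have key : (h (v + w) + h (v - w) - 2 * h v) • v
        + (h (v + w) - h (v - w) - 2 * h w) • w = 0 := by
      linear_combination (norm := module) -e1 - e2
    set a := h (v + w) + h (v - w) - 2 * h v with ha
    set b := h (v + w) - h (v - w) - 2 * h w with hb
    have hb0 : b = 0 := by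
      by_contra hbne
      apply hcv
      refine ⟨b⁻¹ * -a, ?_⟩
      have hbw : b • w = (-a) • v := by
        linear_combination (norm := module) key
      have := congrArg (fun x => b⁻¹ • x) hbw
      simpa only [smul_smul, inv_mul_cancel₀ hbne, one_smul] using this
    have ha0 : a = 0 := by
      rw [hb0, zero_smul, add_zero] at key
      rcases smul_eq_zero.mp key with h' | h'
      · exact h'
      · exact absurd h' hv
    rw [ha] at ha0
    rw [hb] at hb0
    linarith
  refine ⟨⟨hadd, fun c v => homog c v⟩, ?_⟩
  intro v w
  have e1 : S v v + S v w + S w v + S w w = h (v + w) • (v + w) := by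
    have := hS (v + w)
    simp only [map_add, LinearMap.add_apply] at this
    linear_combination (norm := module) this
  rw [hS v, hS w, hSsym w v, hadd v w] at e1
  linear_combination (norm := module) (1/2 : ℝ) • e1
end
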